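/- arXiv:1502.06143 — 2 statements merged into one kernel-verified Lean document; each statement's English description precedes it below -/
import Mathlib

section
/- Let F : R^d → R^d be a bounded measurable vector field, ρ a probability density on R^d, and p > 0 real. Then for each j ∈ {1,…,N}, ∫ |F⋆ρ(x_j) − (1/N)∑_{k=1}^N F(x_j − x_k)|^p ∏_{m=1}^N ρ(x_m)dx_m ≤ (2⌊p/2⌋ + 2)·(2‖F‖_∞)^p / N^{min(p/2, 1)}. -/
open MeasureTheory

open Finset

local notation "⟪" x ", " y "⟫" => @inner ℝ _ _ x y

lemma aux_integrable_of_bounded {α : Type*} [MeasurableSpace α] {μ : Measure α}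
    [IsFiniteMeasure μ] {f : α → ℝ}
    (hm : Measurable f) (M : ℝ) (hb : ∀ y, |f y| ≤ M) : Integrable f μ :=
  (integrable_const M).mono' hm.aestronglyMeasurable
    (Filter.Eventually.of_forall (by simpa using hb))

lemma aux_abs_coord_le {d : ℕ} (v : EuclideanSpace ℝ (Fin d)) (i : Fin d) : |v i| ≤ ‖v‖ := by
  have h1 : |v i| = |(inner ℝ (EuclideanSpace.single i (1:ℝ)) v : ℝ)| := by
    rw [EuclideanSpace.inner_single_left]
    simp
  rw [h1]
  calc |(inner ℝ (EuclideanSpace.single i (1:ℝ)) v : ℝ)|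
      ≤ ‖EuclideanSpace.single i (1:ℝ)‖ * ‖v‖ := abs_real_inner_le_norm _ _
    _ = ‖v‖ := by rw [EuclideanSpace.norm_single]; simp

lemma key_var {α : Type*} [MeasurableSpace α] {d : ℕ} (ν : Measure α)
    [IsProbabilityMeasure ν] {n : ℕ}
    (h : α → EuclideanSpace ℝ (Fin d)) (hm : Measurable h)
    (M : ℝ) (hb : ∀ y, ‖h y‖ ≤ M) (h0 : ∫ y, h y ∂ν = 0)
    (c : EuclideanSpace ℝ (Fin d)) (hc : ‖c‖ ≤ M) :
    ∫ y : Fin n → α, ‖c + ∑ m, h (y m)‖ ^ 2 ∂(Measure.pi fun _ : Fin n => ν)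
      ≤ (n + 1) * M ^ 2 := by
  letI : MeasureSpace α := ⟨ν⟩
  have hvol : (Measure.pi fun _ : Fin n => ν) = (volume : Measure (Fin n → α)) := rfl
  haveI : IsProbabilityMeasure (volume : Measure α) := ‹IsProbabilityMeasure ν›
  have h0' : ∫ y : α, h y = 0 := h0
  have hM : 0 ≤ M := le_trans (norm_nonneg _) hc
  have hint : Integrable h (volume : Measure α) := by
    refine (integrable_const M).mono' hm.aestronglyMeasurable (Filter.Eventually.of_forall ?_)
    simpa using hb
  have hmeval : ∀ k : Fin n, Measurable fun y : Fin n → α => h (y k) :=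
    fun k => hm.comp (measurable_pi_apply k)
  rw [hvol]
  -- expand the square
  have expand : ∀ y : Fin n → α,
      ‖c + ∑ m, h (y m)‖ ^ 2
        = ‖c‖ ^ 2 + 2 * ∑ m, ⟪c, h (y m)⟫ + ∑ k, ∑ l, ⟪h (y k), h (y l)⟫ := by
    intro y
    have hs : ‖∑ m, h (y m)‖ ^ 2 = ∑ k, ∑ l, ⟪h (y k), h (y l)⟫ := by
      rw [← real_inner_self_eq_norm_sq, sum_inner]
      exact Finset.sum_congr rfl fun k _ => by rw [inner_sum]
    rw [norm_add_sq_real, inner_sum, hs]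
  have hinner_int : ∀ k l : Fin n,
      Integrable (fun y : Fin n → α => ⟪h (y k), h (y l)⟫) volume := by
    intro k l
    refine aux_integrable_of_bounded ((hmeval k).inner (hmeval l)) (M * M) fun y => ?_
    calc |⟪h (y k), h (y l)⟫| ≤ ‖h (y k)‖ * ‖h (y l)‖ := abs_real_inner_le_norm _ _
      _ ≤ M * M := by
          apply mul_le_mul (hb _) (hb _) (norm_nonneg _) hM
  have hcin_int : ∀ m : Fin n,
      Integrable (fun y : Fin n → α => ⟪c, h (y m)⟫) volume := by
    intro m
    refine aux_integrable_of_bounded (measurable_const.inner (hmeval m)) (M * M) fun y => ?_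
    calc |⟪c, h (y m)⟫| ≤ ‖c‖ * ‖h (y m)‖ := abs_real_inner_le_norm _ _
      _ ≤ M * M := mul_le_mul hc (hb _) (norm_nonneg _) hM
  -- single-coordinate integrals vanish
  have hzero_single : ∀ m : Fin n, (∫ y : Fin n → α, ⟪c, h (y m)⟫) = 0 := by
    intro m
    have hprod : ∀ y : Fin n → α, ⟪c, h (y m)⟫
        = ∏ i : Fin n,
            (fun i => if i = m then (fun z : α => ⟪c, h z⟫) else fun _ => (1:ℝ)) i (y i) := by
      intro y
      rw [Finset.prod_eq_single m (fun i _ hi => by simp [hi]) (by simp)]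
      simp
    simp_rw [hprod]
    rw [MeasureTheory.integral_fintype_prod_volume_eq_prod]
    refine Finset.prod_eq_zero (Finset.mem_univ m) ?_
    simp only [eq_self_iff_true, if_true]
    rw [integral_inner hint, h0', inner_zero_right]
  -- off-diagonal pair integrals vanish
  have hzero_pair : ∀ k l : Fin n, k ≠ l →
      (∫ y : Fin n → α, ⟪h (y k), h (y l)⟫) = 0 := by
    intro k l hkl
    have hcomp : ∀ i : Fin d, Measurable fun z : α => h z i :=
      fun i => (measurable_pi_apply i).comp ((WithLp.measurable_ofLp 2 _).comp hm)
    have hcompint : ∀ i : Fin d, Integrable (fun z : α => h z i) (volume : Measure α) :=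
      fun i => aux_integrable_of_bounded (hcomp i) M
        (fun z => (aux_abs_coord_le (h z) i).trans (hb z))
    have hinner_coord : ∀ y : Fin n → α,
        ⟪h (y k), h (y l)⟫ = ∑ i : Fin d, h (y k) i * h (y l) i := by
      intro y
      rw [PiLp.inner_apply]
      simp [RCLike.inner_apply]
      exact Finset.sum_congr rfl fun _ _ => mul_comm _ _
    simp_rw [hinner_coord]
    rw [integral_finset_sum]
    · refine Finset.sum_eq_zero fun i _ => ?_
      have hprod : ∀ y : Fin n → α, h (y k) i * h (y l) i
          = ∏ m : Fin n,
              (fun m => if m = k then (fun z : α => h z i)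
                else if m = l then (fun z : α => h z i) else fun _ => (1:ℝ)) m (y m) := by
        intro y
        rw [← Finset.mul_prod_erase Finset.univ _ (Finset.mem_univ k),
          ← Finset.mul_prod_erase _ _ (Finset.mem_erase.2 ⟨Ne.symm hkl, Finset.mem_univ l⟩),
          Finset.prod_eq_one]
        · simp [hkl, Ne.symm hkl]
        · intro m hmm
          simp only [Finset.mem_erase] at hmm
          simp [hmm.1, hmm.2.1]
      simp_rw [hprod]
      rw [MeasureTheory.integral_fintype_prod_volume_eq_prod]
      refine Finset.prod_eq_zero (Finset.mem_univ k) ?_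
      simp only [eq_self_iff_true, if_true]
      have : ∫ z : α, h z i = (EuclideanSpace.proj i) (∫ z : α, h z) := by
        rw [← ContinuousLinearMap.integral_comp_comm _ hint]
        rfl
      rw [this, h0', map_zero]
    · intro i _
      refine aux_integrable_of_bounded (((hcomp i).comp (measurable_pi_apply k)).mul
        ((hcomp i).comp (measurable_pi_apply l))) (M * M) fun y => ?_
      rw [abs_mul]
      exact mul_le_mul ((aux_abs_coord_le _ _).trans (hb _))
        ((aux_abs_coord_le _ _).trans (hb _)) (abs_nonneg _) hM
  -- put everything together
  simp_rw [expand]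
  have hsum_int : Integrable
      (fun y : Fin n → α => ∑ k, ∑ l, ⟪h (y k), h (y l)⟫) volume :=
    integrable_finset_sum _ fun k _ => integrable_finset_sum _ fun l _ => hinner_int k l
  have hlin_int : Integrable (fun y : Fin n → α => 2 * ∑ m, ⟪c, h (y m)⟫) volume :=
    (integrable_finset_sum _ fun m _ => hcin_int m).const_mul 2
  rw [integral_add (f := fun y : Fin n → α => ‖c‖ ^ 2 + 2 * ∑ m, ⟪c, h (y m)⟫)
      (g := fun y : Fin n → α => ∑ k, ∑ l, ⟪h (y k), h (y l)⟫)
      ((integrable_const _).add hlin_int) hsum_int,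
    integral_add (f := fun _w : Fin n → α => ‖c‖ ^ 2)
      (g := fun y : Fin n → α => 2 * ∑ m, ⟪c, h (y m)⟫)
      (integrable_const _) hlin_int,
    integral_const_mul, integral_finset_sum _ fun m _ => hcin_int m]
  simp_rw [hzero_single]
  rw [integral_finset_sum _ fun k _ => integrable_finset_sum _ fun l _ => hinner_int k l]
  have hdiag : ∀ k : Fin n, (∑ l, ∫ y : Fin n → α, ⟪h (y k), h (y l)⟫) ≤ M ^ 2 := by
    intro k
    have : ∀ l : Fin n, (∫ y : Fin n → α, ⟪h (y k), h (y l)⟫)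
        ≤ if l = k then M ^ 2 else 0 := by
      intro l
      rcases eq_or_ne l k with rfl | hlk
      · simp only [if_pos rfl]
        have hpt : ∀ y : Fin n → α, ⟪h (y l), h (y l)⟫ ≤ M ^ 2 := by
          intro y
          rw [real_inner_self_eq_norm_sq]
          exact pow_le_pow_left₀ (norm_nonneg _) (hb _) 2
        calc (∫ y : Fin n → α, ⟪h (y l), h (y l)⟫)
            ≤ ∫ _y : Fin n → α, M ^ 2 :=
              integral_mono (hinner_int l l) (integrable_const _)
                (fun y => hpt y)
          _ = M ^ 2 := by simp
      · rw [hzero_pair k l (Ne.symm hlk), if_neg hlk]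
    calc (∑ l, ∫ y : Fin n → α, ⟪h (y k), h (y l)⟫)
        ≤ ∑ l, if l = k then M ^ 2 else 0 := Finset.sum_le_sum fun l _ => this l
      _ = M ^ 2 := by simp
  have hfinal : (∑ k : Fin n, ∑ l, ∫ y : Fin n → α, ⟪h (y k), h (y l)⟫)
      ≤ n * M ^ 2 := by
    calc (∑ k : Fin n, ∑ l, ∫ y : Fin n → α, ⟪h (y k), h (y l)⟫)
        ≤ ∑ _k : Fin n, M ^ 2 := Finset.sum_le_sum fun k _ => hdiag k
      _ = n * M ^ 2 := by simp
  have hc2 : ‖c‖ ^ 2 ≤ M ^ 2 := pow_le_pow_left₀ (norm_nonneg _) hc 2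
  simp only [integral_const, probReal_univ, measure_univ, ENNReal.toReal_one, smul_eq_mul, one_mul,
    Finset.sum_const_zero, mul_zero, add_zero]
  push_cast
  have hswap : ∀ k : Fin n, (∫ a : Fin n → α, ∑ l, ⟪h (a k), h (a l)⟫)
      = ∑ l, ∫ a : Fin n → α, ⟪h (a k), h (a l)⟫ :=
    fun k => integral_finset_sum _ fun l _ => hinner_int k l
  simp_rw [hswap]
  linarith [hfinal, hc2]

set_option maxHeartbeats 2000000 in
/-- Combinatorial law-of-large-numbers lemma: if `F : ℝ^d → ℝ^d` is bounded
measurable (`‖F‖_∞ ≤ C`), `ρ` is a probability density on `ℝ^d` and `p > 0`, then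
for each `j`,
`∫ |F⋆ρ(x_j) − (1/N)∑_k F(x_j − x_k)|^p ∏ρ(x_m)dx_m
   ≤ (2⌊p/2⌋ + 2)·(2C)^p / N^{min(p/2,1)}`. -/
theorem empirical_mean_field_Lp_bound (d N : ℕ) (hN : 1 ≤ N)
    (F : EuclideanSpace ℝ (Fin d) → EuclideanSpace ℝ (Fin d)) (hFm : Measurable F)
    (C : ℝ) (hFb : ∀ x, ‖F x‖ ≤ C)
    (ρ : EuclideanSpace ℝ (Fin d) → ℝ) (hρm : Measurable ρ)
    (hρ0 : ∀ x, 0 ≤ ρ x) (hρ1 : ∫ x, ρ x = 1)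
    (p : ℝ) (hp : 0 < p) (j : Fin N) :
    ∫ X : Fin N → EuclideanSpace ℝ (Fin d),
        ‖(∫ z, ρ z • F (X j - z)) - (N : ℝ)⁻¹ • ∑ k, F (X j - X k)‖ ^ p
        ∂(Measure.pi fun _ : Fin N =>
            volume.withDensity fun x => ENNReal.ofReal (ρ x))
      ≤ (2 * (⌊p / 2⌋ : ℝ) + 2) * (2 * C) ^ p / (N : ℝ) ^ min (p / 2) 1 := by
  classical
  have hC : 0 ≤ C := le_trans (norm_nonneg _) (hFb 0)
  have hNpos : (0:ℝ) < N := by exact_mod_cast hN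
  have hfloor : (0:ℝ) ≤ (⌊p / 2⌋ : ℝ) := by
    have : (0:ℤ) ≤ ⌊p / 2⌋ := Int.floor_nonneg.2 (by positivity)
    exact_mod_cast this
  -- trivial case C = 0
  rcases eq_or_lt_of_le hC with hC0 | hCpos
  · have hF0 : ∀ x, F x = 0 := fun x => norm_le_zero_iff.mp (hC0 ▸ hFb x)
    have hZ0 : ∀ X : Fin N → EuclideanSpace ℝ (Fin d),
        ‖(∫ z, ρ z • F (X j - z)) - (N : ℝ)⁻¹ • ∑ k, F (X j - X k)‖ ^ p = 0 := by
      intro X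
      simp [hF0, Real.zero_rpow hp.ne']
    simp only [hZ0, integral_zero]
    rw [← hC0]
    rw [mul_zero, Real.zero_rpow hp.ne', mul_zero, zero_div]
  -- main case
  have hρint : Integrable ρ := by
    by_contra hcon
    rw [integral_undef hcon] at hρ1
    norm_num at hρ1
  set ν : Measure (EuclideanSpace ℝ (Fin d)) :=
    volume.withDensity fun x => ENNReal.ofReal (ρ x) with hν
  haveI hνP : IsProbabilityMeasure ν := by
    constructor
    rw [hν, withDensity_apply _ MeasurableSet.univ, Measure.restrict_univ,
      ← MeasureTheory.ofReal_integral_eq_lintegral_ofReal hρint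
        (Filter.Eventually.of_forall hρ0), hρ1, ENNReal.ofReal_one]
  set g : EuclideanSpace ℝ (Fin d) → EuclideanSpace ℝ (Fin d) :=
    fun x => ∫ z, ρ z • F (x - z) with hg
  have hgν : ∀ x, g x = ∫ z, F (x - z) ∂ν := by
    intro x
    show (∫ z, ρ z • F (x - z)) = ∫ z, F (x - z) ∂ν
    have hwd : ν = volume.withDensity (fun x => ((ρ x).toNNReal : ENNReal)) := rfl
    rw [hwd, integral_withDensity_eq_integral_smul (f := fun z => (ρ z).toNNReal)
      hρm.real_toNNReal (fun z => F (x - z))]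
    congr 1
    ext z
    rw [NNReal.smul_def, Real.coe_toNNReal _ (hρ0 z)]
  have hFint : ∀ a : EuclideanSpace ℝ (Fin d),
      Integrable (fun z => F (a - z)) ν := by
    intro a
    refine (integrable_const C).mono'
      ((hFm.comp (measurable_const.sub measurable_id)).aestronglyMeasurable)
      (Filter.Eventually.of_forall fun z => hFb _)
  have hgb : ∀ x, ‖g x‖ ≤ C := by
    intro x
    rw [hgν]
    calc ‖∫ z, F (x - z) ∂ν‖ ≤ C * (ν Set.univ).toReal :=
          norm_integral_le_of_norm_le_const (Filter.Eventually.of_forall fun z => hFb _)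
      _ = C := by simp [measure_univ]
  have hgm : Measurable g := by
    have hsm : StronglyMeasurable fun q : (EuclideanSpace ℝ (Fin d)) × (EuclideanSpace ℝ (Fin d))
        => ρ q.2 • F (q.1 - q.2) :=
      ((hρm.comp measurable_snd).smul (hFm.comp (measurable_fst.sub measurable_snd))).stronglyMeasurable
    exact hsm.integral_prod_right'.measurable
  set Z : (Fin N → EuclideanSpace ℝ (Fin d)) → EuclideanSpace ℝ (Fin d) :=
    fun X => g (X j) - (N:ℝ)⁻¹ • ∑ k, F (X j - X k) with hZdef
  have hZint : ∀ X : Fin N → EuclideanSpace ℝ (Fin d),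
      (∫ z, ρ z • F (X j - z)) - (N : ℝ)⁻¹ • ∑ k, F (X j - X k) = Z X := fun X => rfl
  have hZm : Measurable Z :=
    (hgm.comp (measurable_pi_apply j)).sub
      ((Finset.measurable_sum Finset.univ fun k _ =>
        hFm.comp ((measurable_pi_apply j).sub (measurable_pi_apply k))).const_smul ((N:ℝ)⁻¹))
  have hZb : ∀ X, ‖Z X‖ ≤ 2 * C := by
    intro X
    have h1 : ‖(N:ℝ)⁻¹ • ∑ k, F (X j - X k)‖ ≤ C := by
      rw [norm_smul, Real.norm_eq_abs, abs_of_pos (by positivity)]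
      have h2 : ‖∑ k : Fin N, F (X j - X k)‖ ≤ N * C := by
        calc ‖∑ k : Fin N, F (X j - X k)‖ ≤ ∑ k : Fin N, ‖F (X j - X k)‖ :=
              norm_sum_le _ _
          _ ≤ ∑ _k : Fin N, C := Finset.sum_le_sum fun k _ => hFb _
          _ = N * C := by simp [mul_comm]
      calc (N:ℝ)⁻¹ * ‖∑ k : Fin N, F (X j - X k)‖ ≤ (N:ℝ)⁻¹ * (N * C) := by
            exact mul_le_mul_of_nonneg_left h2 (by positivity)
        _ = C := by field_simp
    calc ‖Z X‖ ≤ ‖g (X j)‖ + ‖(N:ℝ)⁻¹ • ∑ k, F (X j - X k)‖ := norm_sub_le _ _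
      _ ≤ C + C := add_le_add (hgb _) h1
      _ = 2 * C := by ring
  haveI : IsProbabilityMeasure (Measure.pi fun _ : Fin N => ν) := by infer_instance
  have hZ2int : Integrable (fun X => ‖Z X‖ ^ 2) (Measure.pi fun _ : Fin N => ν) := by
    refine aux_integrable_of_bounded (hZm.norm.pow_const 2) ((2*C)^2) fun X => ?_
    rw [abs_of_nonneg (by positivity)]
    exact pow_le_pow_left₀ (norm_nonneg _) (hZb X) 2
  -- the variance estimate
  have K2 : ∫ X, ‖Z X‖ ^ 2 ∂(Measure.pi fun _ : Fin N => ν) ≤ (2*C)^2 / N := by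
    obtain ⟨n, rfl⟩ : ∃ n, N = n + 1 := ⟨N - 1, (Nat.succ_pred_eq_of_pos hN).symm⟩
    have mp := (measurePreserving_piFinSuccAbove (fun _ : Fin (n+1) => ν) j).symm
    rw [← mp.integral_comp']
    have hsymm : ∀ q : (EuclideanSpace ℝ (Fin d)) × (Fin n → EuclideanSpace ℝ (Fin d)),
        (MeasurableEquiv.piFinSuccAbove (fun _ => EuclideanSpace ℝ (Fin d)) j).symm q
          = j.insertNth q.1 q.2 := by
      intro q
      simp [MeasurableEquiv.piFinSuccAbove_symm_apply, Fin.insertNthEquiv]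
    have hZq : ∀ (a : EuclideanSpace ℝ (Fin d)) (y : Fin n → EuclideanSpace ℝ (Fin d)),
        Z (j.insertNth a y)
          = ((n+1:ℕ):ℝ)⁻¹ • ((g a - F 0) + ∑ m, (g a - F (a - y m))) := by
      intro a y
      set X' : Fin (n+1) → EuclideanSpace ℝ (Fin d) := j.insertNth a y with hX'
      have hsum : ∑ k, F (X' j - X' k)
          = F 0 + ∑ m, F (a - y m) := by
        rw [Fin.sum_univ_succAbove (fun k => F (X' j - X' k)) j]
        simp [hX', Fin.insertNth_apply_same, Fin.insertNth_apply_succAbove, sub_self]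
      have hXj : X' j = a := by simp [hX']
      rw [hZdef]
      show g (X' j) - ((n+1:ℕ):ℝ)⁻¹ • ∑ k, F (X' j - X' k)
        = ((n+1:ℕ):ℝ)⁻¹ • ((g a - F 0) + ∑ m, (g a - F (a - y m)))
      rw [hsum, hXj]
      have hexp : (g a - F 0) + ∑ m, (g a - F (a - y m))
          = ((n+1:ℕ):ℝ) • g a - (F 0 + ∑ m, F (a - y m)) := by
        rw [Finset.sum_sub_distrib, Finset.sum_const, Finset.card_univ, Fintype.card_fin]
        push_cast
        rw [add_smul, one_smul]
        have : (n:ℝ) • g a = (n:ℕ) • g a := by rw [Nat.cast_smul_eq_nsmul]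
        rw [this]
        abel
      rw [hexp, smul_sub, smul_smul, inv_mul_cancel₀ (by positivity), one_smul]
    calc ∫ q : (EuclideanSpace ℝ (Fin d)) × (Fin n → EuclideanSpace ℝ (Fin d)),
          ‖Z ((MeasurableEquiv.piFinSuccAbove (fun _ => EuclideanSpace ℝ (Fin d)) j).symm q)‖ ^ 2
          ∂(ν.prod (Measure.pi fun _ => ν))
        = ∫ q : (EuclideanSpace ℝ (Fin d)) × (Fin n → EuclideanSpace ℝ (Fin d)),
          (((n+1:ℕ):ℝ)⁻¹)^2 * ‖(g q.1 - F 0) + ∑ m, (g q.1 - F (q.1 - q.2 m))‖ ^ 2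
          ∂(ν.prod (Measure.pi fun _ => ν)) := by
          congr 1
          ext q
          rw [hsymm, hZq, norm_smul, mul_pow, Real.norm_eq_abs, sq_abs]
      _ = ∫ a, ∫ y : Fin n → EuclideanSpace ℝ (Fin d),
            (((n+1:ℕ):ℝ)⁻¹)^2 * ‖(g a - F 0) + ∑ m, (g a - F (a - y m))‖ ^ 2
            ∂(Measure.pi fun _ : Fin n => ν) ∂ν := by
          rw [MeasureTheory.integral_prod]
          refine aux_integrable_of_bounded ?_ ((((n+1:ℕ):ℝ)⁻¹)^2 * ((n+1) * (2*C))^2) ?_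
          · refine (measurable_const.mul ?_)
            refine (Measurable.norm ?_).pow_const 2
            refine ((hgm.comp measurable_fst).sub measurable_const).add ?_
            exact Finset.measurable_sum Finset.univ fun m _ =>
              (hgm.comp measurable_fst).sub
                (hFm.comp (measurable_fst.sub ((measurable_pi_apply m).comp measurable_snd)))
          · intro q
            rw [abs_of_nonneg (by positivity)]
            have hb1 : ‖(g q.1 - F 0) + ∑ m, (g q.1 - F (q.1 - q.2 m))‖ ≤ (n+1) * (2*C) := by
              calc ‖(g q.1 - F 0) + ∑ m, (g q.1 - F (q.1 - q.2 m))‖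
                  ≤ ‖g q.1 - F 0‖ + ‖∑ m, (g q.1 - F (q.1 - q.2 m))‖ := norm_add_le _ _
                _ ≤ (2*C) + (n * (2*C)) := by
                    refine add_le_add ?_ ?_
                    · calc ‖g q.1 - F 0‖ ≤ ‖g q.1‖ + ‖F 0‖ := norm_sub_le _ _
                        _ ≤ C + C := add_le_add (hgb _) (hFb _)
                        _ = 2*C := by ring
                    · calc ‖∑ m, (g q.1 - F (q.1 - q.2 m))‖
                          ≤ ∑ m : Fin n, ‖g q.1 - F (q.1 - q.2 m)‖ := norm_sum_le _ _
                        _ ≤ ∑ _m : Fin n, (2*C) := by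
                            refine Finset.sum_le_sum fun m _ => ?_
                            calc ‖g q.1 - F (q.1 - q.2 m)‖ ≤ ‖g q.1‖ + ‖F (q.1 - q.2 m)‖ :=
                              norm_sub_le _ _
                              _ ≤ C + C := add_le_add (hgb _) (hFb _)
                              _ = 2*C := by ring
                        _ = n * (2*C) := by simp [mul_comm]
                _ = (n+1) * (2*C) := by ring
            refine mul_le_mul_of_nonneg_left ?_ (by positivity)
            calc ‖(g q.1 - F 0) + ∑ m, (g q.1 - F (q.1 - q.2 m))‖ ^ 2
                ≤ ((n+1) * (2*C)) ^ 2 := by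
                  exact pow_le_pow_left₀ (norm_nonneg _) hb1 2
              _ = ((n+1) * (2*C))^2 := rfl
      _ ≤ ∫ _a, (2*C)^2 / ((n+1:ℕ):ℝ) ∂ν := by
          refine integral_mono_of_nonneg (Filter.Eventually.of_forall fun a => ?_)
            (integrable_const _) (Filter.Eventually.of_forall fun a => ?_)
          · positivity
          · have hkey := key_var ν (fun z => g a - F (a - z))
              (measurable_const.sub (hFm.comp (measurable_const.sub measurable_id)))
              (2*C)
              (fun z => by
                calc ‖g a - F (a - z)‖ ≤ ‖g a‖ + ‖F (a - z)‖ := norm_sub_le _ _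
                  _ ≤ C + C := add_le_add (hgb _) (hFb _)
                  _ = 2*C := by ring)
              (by
                rw [integral_sub (integrable_const _) (hFint a), integral_const]
                simp [measure_univ, ← hgν a])
              (g a - F 0)
              (by
                calc ‖g a - F 0‖ ≤ ‖g a‖ + ‖F 0‖ := norm_sub_le _ _
                  _ ≤ C + C := add_le_add (hgb _) (hFb _)
                  _ = 2*C := by ring)
              (n := n)
            dsimp only
            rw [integral_const_mul]
            calc (((n+1:ℕ):ℝ)⁻¹)^2 * ∫ y : Fin n → EuclideanSpace ℝ (Fin d),
                  ‖(g a - F 0) + ∑ m, (g a - F (a - y m))‖ ^ 2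
                  ∂(Measure.pi fun _ : Fin n => ν)
                ≤ (((n+1:ℕ):ℝ)⁻¹)^2 * ((n + 1) * (2*C)^2) := by
                  refine mul_le_mul_of_nonneg_left ?_ (by positivity)
                  exact hkey
              _ = (2*C)^2 / ((n+1:ℕ):ℝ) := by
                  push_cast
                  field_simp
      _ = (2*C)^2 / ((n+1:ℕ):ℝ) := by simp [measure_univ]
  -- now the rpow cases
  simp only [hZint]
  set B := 2 * C with hB
  have hBpos : 0 < B := by positivity
  rcases le_or_gt p 2 with hp2 | hp2
  · -- case p ≤ 2
    rw [min_eq_left (by linarith : p / 2 ≤ 1)]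
    set s : ℝ := B * (N:ℝ) ^ (-(2:ℝ)⁻¹) with hs
    have hspos : 0 < s := mul_pos hBpos (Real.rpow_pos_of_pos hNpos _)
    have ptwise : ∀ X, ‖Z X‖ ^ p ≤ s ^ p + s ^ (p-2) * ‖Z X‖ ^ 2 := by
      intro X
      rcases le_or_gt (‖Z X‖) s with h | h
      · have h1 : ‖Z X‖ ^ p ≤ s ^ p := Real.rpow_le_rpow (norm_nonneg _) h hp.le
        have h2 : 0 ≤ s ^ (p-2) * ‖Z X‖ ^ 2 := by positivity
        linarith
      · have ht0 : (0:ℝ) < ‖Z X‖ := hspos.trans h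
        have hts : ‖Z X‖ ^ p = ‖Z X‖ ^ (p-2) * ‖Z X‖ ^ 2 := by
          rw [← Real.rpow_natCast (‖Z X‖) 2, ← Real.rpow_add ht0]
          norm_num
        have h1 : ‖Z X‖ ^ (p-2) ≤ s ^ (p-2) :=
          Real.rpow_le_rpow_of_nonpos hspos h.le (by linarith)
        have h2 : 0 ≤ s ^ p := by positivity
        calc ‖Z X‖ ^ p = ‖Z X‖ ^ (p-2) * ‖Z X‖ ^ 2 := hts
          _ ≤ s ^ (p-2) * ‖Z X‖ ^ 2 :=
            mul_le_mul_of_nonneg_right h1 (by positivity)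
          _ ≤ s ^ p + s ^ (p-2) * ‖Z X‖ ^ 2 := by linarith
    calc ∫ X, ‖Z X‖ ^ p ∂(Measure.pi fun _ : Fin N => ν)
        ≤ ∫ X, (s ^ p + s ^ (p-2) * ‖Z X‖ ^ 2) ∂(Measure.pi fun _ : Fin N => ν) := by
          refine integral_mono_of_nonneg (Filter.Eventually.of_forall fun X => ?_)
            ((integrable_const _).add (hZ2int.const_mul _))
            (Filter.Eventually.of_forall fun X => ptwise X)
          positivity
      _ = s ^ p + s ^ (p-2) * ∫ X, ‖Z X‖ ^ 2 ∂(Measure.pi fun _ : Fin N => ν) := by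
          rw [integral_add (integrable_const _) (hZ2int.const_mul _),
            integral_const, integral_const_mul]
          simp [measure_univ]
      _ ≤ s ^ p + s ^ (p-2) * (B^2 / N) := by
          refine add_le_add_right (mul_le_mul_of_nonneg_left K2 (by positivity)) _
      _ = 2 * (B ^ p / (N:ℝ) ^ (p/2)) := by
          have e1 : s ^ p = B ^ p * (N:ℝ) ^ (-(2:ℝ)⁻¹ * p) := by
            rw [hs, Real.mul_rpow hBpos.le (Real.rpow_pos_of_pos hNpos _).le,
              ← Real.rpow_mul hNpos.le]
          have e2 : s ^ (p-2) * (B^2 / N) = B ^ p * (N:ℝ) ^ (-(2:ℝ)⁻¹ * p) := by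
            rw [hs, Real.mul_rpow hBpos.le (Real.rpow_pos_of_pos hNpos _).le,
              ← Real.rpow_mul hNpos.le, div_eq_mul_inv, ← Real.rpow_natCast B 2,
              ← Real.rpow_neg_one (N:ℝ)]
            calc B ^ (p-2) * (N:ℝ) ^ (-(2:ℝ)⁻¹ * (p-2)) * (B ^ ((2:ℕ):ℝ) * (N:ℝ) ^ (-1:ℝ))
                = (B ^ (p-2) * B ^ ((2:ℕ):ℝ)) * ((N:ℝ) ^ (-(2:ℝ)⁻¹ * (p-2)) * (N:ℝ) ^ (-1:ℝ)) := by
                  ring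
              _ = B ^ p * (N:ℝ) ^ (-(2:ℝ)⁻¹ * p) := by
                  rw [← Real.rpow_add hBpos, ← Real.rpow_add hNpos]
                  have h1 : p - 2 + ((2:ℕ):ℝ) = p := by push_cast; ring
                  have h2 : -(2:ℝ)⁻¹ * (p-2) + (-1:ℝ) = -(2:ℝ)⁻¹ * p := by ring
                  rw [h1, h2]
          rw [e1, e2]
          have hNe : (N:ℝ) ^ (-(2:ℝ)⁻¹ * p) = ((N:ℝ) ^ (p/2))⁻¹ := by
            rw [show -(2:ℝ)⁻¹ * p = -(p/2) by ring, Real.rpow_neg hNpos.le]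
          rw [hNe, div_eq_mul_inv]
          ring
      _ ≤ (2 * (⌊p / 2⌋ : ℝ) + 2) * B ^ p / (N : ℝ) ^ (p / 2) := by
          rw [mul_div_assoc, div_eq_mul_inv]
          refine mul_le_mul_of_nonneg_right (by linarith) (by positivity)
  · -- case p > 2
    rw [min_eq_right (by linarith : (1:ℝ) ≤ p / 2)]
    have hfl1 : (1:ℝ) ≤ (⌊p / 2⌋ : ℝ) := by
      have : (1:ℤ) ≤ ⌊p / 2⌋ := by
        rw [Int.le_floor]
        push_cast
        linarith
      exact_mod_cast this
    have ptwise : ∀ X, ‖Z X‖ ^ p ≤ B ^ (p-2) * ‖Z X‖ ^ 2 := by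
      intro X
      rcases eq_or_lt_of_le (norm_nonneg (Z X)) with h0 | h0
      · rw [← h0, Real.zero_rpow hp.ne']
        positivity
      · have hts : ‖Z X‖ ^ p = ‖Z X‖ ^ (p-2) * ‖Z X‖ ^ 2 := by
          rw [← Real.rpow_natCast (‖Z X‖) 2, ← Real.rpow_add h0]
          norm_num
        rw [hts]
        refine mul_le_mul_of_nonneg_right ?_ (by positivity)
        exact Real.rpow_le_rpow (norm_nonneg _) (hZb X) (by linarith)
    calc ∫ X, ‖Z X‖ ^ p ∂(Measure.pi fun _ : Fin N => ν)
        ≤ ∫ X, B ^ (p-2) * ‖Z X‖ ^ 2 ∂(Measure.pi fun _ : Fin N => ν) := by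
          refine integral_mono_of_nonneg (Filter.Eventually.of_forall fun X => ?_)
            (hZ2int.const_mul _) (Filter.Eventually.of_forall fun X => ptwise X)
          positivity
      _ = B ^ (p-2) * ∫ X, ‖Z X‖ ^ 2 ∂(Measure.pi fun _ : Fin N => ν) := integral_const_mul _ _
      _ ≤ B ^ (p-2) * (B^2 / N) := mul_le_mul_of_nonneg_left K2 (by positivity)
      _ = B ^ p / N := by
          rw [div_eq_mul_inv, ← mul_assoc, ← Real.rpow_natCast B 2, ← Real.rpow_add hBpos,
            show p - 2 + ((2:ℕ):ℝ) = p by push_cast; ring, ← div_eq_mul_inv]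
      _ ≤ (2 * (⌊p / 2⌋ : ℝ) + 2) * B ^ p / (N : ℝ) ^ (1:ℝ) := by
          rw [Real.rpow_one, mul_div_assoc]
          have h1 : (0:ℝ) ≤ B ^ p / N := div_nonneg (Real.rpow_nonneg hBpos.le p) hNpos.le
          have h2 : (1:ℝ) ≤ 2 * (⌊p / 2⌋ : ℝ) + 2 := by linarith
          exact le_mul_of_one_le_left h1 h2
end

section
/- Let π be a symmetric (under simultaneous particle permutations) coupling of f^{⊗n'} and F on phase space with N particles each, p ≥ 1, and define D := (1/N)∑_{j=1}^N ∫(|x_j − y_j|^p + |ξ_j − η_j|^p) dπ. Then for each n with 1 ≤ n ≤ N, the marginal π^n of π on the first n particles of each factor is a coupling of f^{⊗n} and the n-particle marginal F^n, and n·D ≥ dist_{MK,p}(f^{⊗n}, F^n)^p. -/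
open MeasureTheory

open scoped Classical in
lemma map_eval_pi' {ι : Type*} [Fintype ι] {α : Type*} [MeasurableSpace α]
    (μ : Measure α) [IsProbabilityMeasure μ] (j : ι) :
    Measure.map (fun a : ι → α => a j) (Measure.pi fun _ : ι => μ) = μ := by
  ext s hs
  rw [Measure.map_apply (measurable_pi_apply j) hs]
  have hpre : (fun a : ι → α => a j) ⁻¹' s
      = Set.pi Set.univ (fun k => if k = j then s else Set.univ) := by
    ext a
    simp only [Set.mem_preimage, Set.mem_pi, Set.mem_univ, true_implies]
    constructor
    · intro h k; by_cases hk : k = j <;> simp [hk, h]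
    · intro h; have := h j; simpa using this
  rw [hpre, Measure.pi_pi]
  rw [Finset.prod_eq_single j (fun k _ hk => by simp [hk, measure_univ]) (by simp)]
  simp

open scoped Classical in
lemma map_proj_pi {ι ι' : Type*} [Fintype ι] [Fintype ι'] {α : Type*} [MeasurableSpace α]
    (μ : Measure α) [IsProbabilityMeasure μ] (e : ι' → ι) (he : Function.Injective e) :
    Measure.map (fun a : ι → α => fun i => a (e i)) (Measure.pi fun _ : ι => μ)
      = Measure.pi fun _ : ι' => μ := by
  have hg : Measurable (fun a : ι → α => fun i => a (e i)) :=
    measurable_pi_lambda _ fun i => measurable_pi_apply _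
  refine (Measure.pi_eq (μ := fun _ : ι' => μ) fun s hs => ?_).symm
  rw [Measure.map_apply hg (MeasurableSet.univ_pi hs)]
  set t : ι → Set α := fun j => if h : ∃ i, e i = j then s h.choose else Set.univ with ht
  have hte : ∀ i, t (e i) = s i := by
    intro i
    have hex : ∃ i', e i' = e i := ⟨i, rfl⟩
    have hspec := hex.choose_spec
    simp only [ht, dif_pos hex]
    rw [he hspec]
  have hpre : (fun a : ι → α => fun i => a (e i)) ⁻¹' Set.pi Set.univ s
      = Set.pi Set.univ t := by
    ext a
    simp only [Set.mem_preimage, Set.mem_pi, Set.mem_univ, true_implies]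
    constructor
    · intro h j
      by_cases hex : ∃ i, e i = j
      · have hspec := hex.choose_spec
        simp only [ht, dif_pos hex]
        have := h hex.choose
        rwa [hspec] at this
      · simp [ht, dif_neg hex]
    · intro h i
      have := h (e i)
      rwa [hte i] at this
  rw [hpre, Measure.pi_pi]
  calc ∏ j : ι, μ (t j) = ∏ j ∈ Finset.univ.image e, μ (t j) := by
        refine (Finset.prod_subset (Finset.subset_univ _) (fun j _ hj => ?_)).symm
        have : ¬∃ i, e i = j := by simpa [Finset.mem_image] using hj
        simp [ht, dif_neg this, measure_univ]
    _ = ∏ i : ι', μ (t (e i)) := Finset.prod_image (fun a _ b _ h => he h)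
    _ = ∏ i : ι', μ (s i) := by simp only [hte]

lemma cont_rpow {p : ℝ} (hp : 0 < p) : Continuous (fun x : ℝ => x ^ p) :=
  continuous_iff_continuousAt.2 fun x => Real.continuousAt_rpow_const x p (Or.inr hp.le)

lemma add_rpow_le {a b p : ℝ} (ha : 0 ≤ a) (hb : 0 ≤ b) (hp : 0 ≤ p) :
    (a + b) ^ p ≤ 2 ^ p * (a ^ p + b ^ p) := by
  have h1 : (a + b) ^ p ≤ (2 * max a b) ^ p := by
    refine Real.rpow_le_rpow (by positivity) ?_ hp
    rcases le_total a b with h | h <;> simp [max_eq_right, max_eq_left, h] <;> linarith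
  have h2 : (2 * max a b) ^ p = 2 ^ p * (max a b) ^ p :=
    Real.mul_rpow (by norm_num) (le_max_iff.2 (Or.inl ha))
  have h3 : (max a b) ^ p ≤ a ^ p + b ^ p := by
    rcases le_total a b with h | h
    · rw [max_eq_right h]
      have : 0 ≤ a ^ p := Real.rpow_nonneg ha p
      linarith
    · rw [max_eq_left h]
      have : 0 ≤ b ^ p := Real.rpow_nonneg hb p
      linarith
  calc (a + b) ^ p ≤ 2 ^ p * (max a b) ^ p := h2 ▸ h1
    _ ≤ 2 ^ p * (a ^ p + b ^ p) := by
        have : (0:ℝ) ≤ 2 ^ p := Real.rpow_nonneg (by norm_num) p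
        nlinarith

section Main

variable (d N : ℕ) (p : ℝ)

/-- single-particle transport cost -/
noncomputable def cc (j : Fin N)
    (ab : (Fin N → EuclideanSpace ℝ (Fin d) × EuclideanSpace ℝ (Fin d)) ×
          (Fin N → EuclideanSpace ℝ (Fin d) × EuclideanSpace ℝ (Fin d))) : ℝ :=
  ‖(ab.1 j).1 - (ab.2 j).1‖ ^ p + ‖(ab.1 j).2 - (ab.2 j).2‖ ^ p

lemma cc_nonneg (j : Fin N) (ab) : 0 ≤ cc d N p j ab :=
  add_nonneg (Real.rpow_nonneg (norm_nonneg _) p) (Real.rpow_nonneg (norm_nonneg _) p)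

lemma cc_measurable (hp : 0 < p) (j : Fin N) : Measurable (cc d N p j) := by
  have h1 : Measurable (fun ab : (Fin N → EuclideanSpace ℝ (Fin d) × EuclideanSpace ℝ (Fin d)) ×
      (Fin N → EuclideanSpace ℝ (Fin d) × EuclideanSpace ℝ (Fin d)) => (ab.1 j)) :=
    (measurable_pi_apply j).comp measurable_fst
  have h2 : Measurable (fun ab : (Fin N → EuclideanSpace ℝ (Fin d) × EuclideanSpace ℝ (Fin d)) ×
      (Fin N → EuclideanSpace ℝ (Fin d) × EuclideanSpace ℝ (Fin d)) => (ab.2 j)) :=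
    (measurable_pi_apply j).comp measurable_snd
  exact (((cont_rpow hp).measurable).comp (h1.fst.sub h2.fst).norm).add
    (((cont_rpow hp).measurable).comp (h1.snd.sub h2.snd).norm)

end Main

/-- From a symmetric coupling of `f^{⊗N}` and `F` to a bound on the
Monge–Kantorovich distance between `f^{⊗n}` and the `n`-particle marginal `F^n`:
the marginal `π^n` of `π` on the first `n` particles of each factor is a coupling
of `f^{⊗n}` and `F^n`, and `n·D ≥ dist_{MK,p}(f^{⊗n}, F^n)^p`, where
`D := (1/N)∑_j ∫(|x_j−y_j|^p + |ξ_j−η_j|^p) dπ`. -/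
theorem symmetric_coupling_marginal_bound (d N n : ℕ) (hn : 1 ≤ n) (hnN : n ≤ N)
    (p : ℝ) (hp : 1 ≤ p)
    (f : Measure (EuclideanSpace ℝ (Fin d) × EuclideanSpace ℝ (Fin d)))
    [IsProbabilityMeasure f]
    (hfmom : Integrable (fun w : EuclideanSpace ℝ (Fin d) × EuclideanSpace ℝ (Fin d) =>
        ‖w.1‖ ^ p + ‖w.2‖ ^ p) f)
    (F : Measure (Fin N → EuclideanSpace ℝ (Fin d) × EuclideanSpace ℝ (Fin d)))
    [IsProbabilityMeasure F]
    (hFmom : Integrable (fun a : Fin N → EuclideanSpace ℝ (Fin d) × EuclideanSpace ℝ (Fin d) =>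
        ∑ j : Fin N, (‖(a j).1‖ ^ p + ‖(a j).2‖ ^ p)) F)
    (π : Measure ((Fin N → EuclideanSpace ℝ (Fin d) × EuclideanSpace ℝ (Fin d)) ×
                  (Fin N → EuclideanSpace ℝ (Fin d) × EuclideanSpace ℝ (Fin d))))
    [IsProbabilityMeasure π]
    (hπ1 : Measure.map Prod.fst π = Measure.pi (fun _ : Fin N => f))
    (hπ2 : Measure.map Prod.snd π = F)
    (hsym : ∀ σ : Equiv.Perm (Fin N),
      Measure.map (fun ab => (ab.1 ∘ σ, ab.2 ∘ σ)) π = π) :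
    Measure.map Prod.fst
        (Measure.map (Prod.map
          (fun a : Fin N → EuclideanSpace ℝ (Fin d) × EuclideanSpace ℝ (Fin d) =>
            fun i : Fin n => a (Fin.castLE hnN i))
          (fun a : Fin N → EuclideanSpace ℝ (Fin d) × EuclideanSpace ℝ (Fin d) =>
            fun i : Fin n => a (Fin.castLE hnN i))) π)
      = Measure.pi (fun _ : Fin n => f) ∧
    Measure.map Prod.snd
        (Measure.map (Prod.map
          (fun a : Fin N → EuclideanSpace ℝ (Fin d) × EuclideanSpace ℝ (Fin d) =>
            fun i : Fin n => a (Fin.castLE hnN i))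
          (fun a : Fin N → EuclideanSpace ℝ (Fin d) × EuclideanSpace ℝ (Fin d) =>
            fun i : Fin n => a (Fin.castLE hnN i))) π)
      = Measure.map
          (fun a : Fin N → EuclideanSpace ℝ (Fin d) × EuclideanSpace ℝ (Fin d) =>
            fun i : Fin n => a (Fin.castLE hnN i)) F ∧
    sInf { c : ℝ |
        ∃ γ : Measure ((Fin n → EuclideanSpace ℝ (Fin d) × EuclideanSpace ℝ (Fin d)) ×
                       (Fin n → EuclideanSpace ℝ (Fin d) × EuclideanSpace ℝ (Fin d))),
          IsProbabilityMeasure γ ∧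
          Measure.map Prod.fst γ = Measure.pi (fun _ : Fin n => f) ∧
          Measure.map Prod.snd γ
            = Measure.map
                (fun a : Fin N → EuclideanSpace ℝ (Fin d) × EuclideanSpace ℝ (Fin d) =>
                  fun i : Fin n => a (Fin.castLE hnN i)) F ∧
          c = ∫ ab, ∑ j : Fin n,
                (‖(ab.1 j).1 - (ab.2 j).1‖ ^ p + ‖(ab.1 j).2 - (ab.2 j).2‖ ^ p) ∂γ }
      ≤ (n : ℝ) * ((N : ℝ)⁻¹ * ∑ j : Fin N,
          ∫ ab, (‖(ab.1 j).1 - (ab.2 j).1‖ ^ p + ‖(ab.1 j).2 - (ab.2 j).2‖ ^ p) ∂π) := by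
  have hp0 : (0:ℝ) < p := lt_of_lt_of_le one_pos hp
  set g : (Fin N → EuclideanSpace ℝ (Fin d) × EuclideanSpace ℝ (Fin d)) →
      (Fin n → EuclideanSpace ℝ (Fin d) × EuclideanSpace ℝ (Fin d)) :=
    fun a => fun i => a (Fin.castLE hnN i) with hg_def
  have hg : Measurable g := measurable_pi_lambda _ fun i => measurable_pi_apply _
  have hgg : Measurable (Prod.map g g) := hg.prodMap hg
  -- first marginal
  have h1 : Measure.map Prod.fst (Measure.map (Prod.map g g) π)
      = Measure.pi (fun _ : Fin n => f) := by
    rw [Measure.map_map measurable_fst hgg]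
    have : (Prod.fst ∘ Prod.map g g) = g ∘ Prod.fst := rfl
    rw [this, ← Measure.map_map hg measurable_fst, hπ1]
    exact map_proj_pi f (Fin.castLE hnN) (Fin.castLE_injective hnN)
  -- second marginal
  have h2 : Measure.map Prod.snd (Measure.map (Prod.map g g) π) = Measure.map g F := by
    rw [Measure.map_map measurable_snd hgg]
    have : (Prod.snd ∘ Prod.map g g) = g ∘ Prod.snd := rfl
    rw [this, ← Measure.map_map hg measurable_snd, hπ2]
  refine ⟨h1, h2, ?_⟩
  -- now the cost bound
  have hN0 : 0 < N := lt_of_lt_of_le hn hnN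
  set j0 : Fin N := ⟨0, hN0⟩ with hj0
  have hh : Measurable (fun w : EuclideanSpace ℝ (Fin d) × EuclideanSpace ℝ (Fin d) =>
      ‖w.1‖ ^ p + ‖w.2‖ ^ p) :=
    (((cont_rpow hp0).measurable).comp measurable_fst.norm).add
      (((cont_rpow hp0).measurable).comp measurable_snd.norm)
  -- symmetry: all single-particle costs are equal
  have hIeq : ∀ j : Fin N,
      (∫ ab, cc d N p j ab ∂π) = ∫ ab, cc d N p j0 ab ∂π := by
    intro j
    set σ : Equiv.Perm (Fin N) := Equiv.swap j0 j with hσ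
    set T : ((Fin N → EuclideanSpace ℝ (Fin d) × EuclideanSpace ℝ (Fin d)) ×
          (Fin N → EuclideanSpace ℝ (Fin d) × EuclideanSpace ℝ (Fin d))) →
        ((Fin N → EuclideanSpace ℝ (Fin d) × EuclideanSpace ℝ (Fin d)) ×
          (Fin N → EuclideanSpace ℝ (Fin d) × EuclideanSpace ℝ (Fin d))) :=
      fun ab => (ab.1 ∘ σ, ab.2 ∘ σ) with hT
    have hTm : Measurable T := by
      refine Measurable.prod ?_ ?_
      · exact measurable_pi_lambda _ fun i => (measurable_pi_apply (σ i)).comp measurable_fst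
      · exact measurable_pi_lambda _ fun i => (measurable_pi_apply (σ i)).comp measurable_snd
    have hmapT : Measure.map T π = π := hsym σ
    calc (∫ ab, cc d N p j ab ∂π) = ∫ ab, cc d N p j0 (T ab) ∂π := by
          refine integral_congr_ae (Filter.Eventually.of_forall fun ab => ?_)
          simp [cc, hT, hσ, Equiv.swap_apply_left, Function.comp]
      _ = ∫ ab, cc d N p j0 ab ∂(Measure.map T π) :=
          (integral_map hTm.aemeasurable
            ((cc_measurable d N p hp0 j0).aestronglyMeasurable)).symm
      _ = ∫ ab, cc d N p j0 ab ∂π := by rw [hmapT]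
  -- integrability of the single-particle cost
  have hint : ∀ j : Fin N, Integrable (cc d N p j) π := by
    intro j
    have hev : Measurable (fun a : Fin N → EuclideanSpace ℝ (Fin d) × EuclideanSpace ℝ (Fin d)
        => a j) := measurable_pi_apply j
    have hmap1 : Measure.map (fun ab : (Fin N → EuclideanSpace ℝ (Fin d) ×
          EuclideanSpace ℝ (Fin d)) × (Fin N → EuclideanSpace ℝ (Fin d) ×
          EuclideanSpace ℝ (Fin d)) => ab.1 j) π = f := by
      have heq : (fun ab : (Fin N → EuclideanSpace ℝ (Fin d) × EuclideanSpace ℝ (Fin d)) ×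
          (Fin N → EuclideanSpace ℝ (Fin d) × EuclideanSpace ℝ (Fin d)) => ab.1 j)
          = (fun a => a j) ∘ Prod.fst := rfl
      rw [heq, ← Measure.map_map hev measurable_fst, hπ1, map_eval_pi']
    have hG1 : Integrable (fun ab : (Fin N → EuclideanSpace ℝ (Fin d) ×
        EuclideanSpace ℝ (Fin d)) × (Fin N → EuclideanSpace ℝ (Fin d) ×
        EuclideanSpace ℝ (Fin d)) => ‖(ab.1 j).1‖ ^ p + ‖(ab.1 j).2‖ ^ p) π := by
      have h0 : Integrable (fun w : EuclideanSpace ℝ (Fin d) × EuclideanSpace ℝ (Fin d) =>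
          ‖w.1‖ ^ p + ‖w.2‖ ^ p) (Measure.map (fun ab : (Fin N → EuclideanSpace ℝ (Fin d) ×
          EuclideanSpace ℝ (Fin d)) × (Fin N → EuclideanSpace ℝ (Fin d) ×
          EuclideanSpace ℝ (Fin d)) => ab.1 j) π) := by
        rw [hmap1]; exact hfmom
      exact (integrable_map_measure hh.aestronglyMeasurable
        ((hev.comp measurable_fst).aemeasurable)).1 h0
    have hmap2 : Measure.map (fun ab : (Fin N → EuclideanSpace ℝ (Fin d) ×
          EuclideanSpace ℝ (Fin d)) × (Fin N → EuclideanSpace ℝ (Fin d) ×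
          EuclideanSpace ℝ (Fin d)) => ab.2 j) π = Measure.map (fun a => a j) F := by
      have heq : (fun ab : (Fin N → EuclideanSpace ℝ (Fin d) × EuclideanSpace ℝ (Fin d)) ×
          (Fin N → EuclideanSpace ℝ (Fin d) × EuclideanSpace ℝ (Fin d)) => ab.2 j)
          = (fun a => a j) ∘ Prod.snd := rfl
      rw [heq, ← Measure.map_map hev measurable_snd, hπ2]
    have hFj : Integrable (fun a : Fin N → EuclideanSpace ℝ (Fin d) × EuclideanSpace ℝ (Fin d)
        => ‖(a j).1‖ ^ p + ‖(a j).2‖ ^ p) F := by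
      refine hFmom.mono' ((hh.comp (measurable_pi_apply j)).aestronglyMeasurable)
        (Filter.Eventually.of_forall fun a => ?_)
      rw [Real.norm_of_nonneg (add_nonneg (Real.rpow_nonneg (norm_nonneg _) _)
        (Real.rpow_nonneg (norm_nonneg _) _))]
      exact Finset.single_le_sum (f := fun i : Fin N => ‖(a i).1‖ ^ p + ‖(a i).2‖ ^ p)
        (fun i _ => add_nonneg (Real.rpow_nonneg (norm_nonneg _) _)
          (Real.rpow_nonneg (norm_nonneg _) _)) (Finset.mem_univ j)
    have hG2 : Integrable (fun ab : (Fin N → EuclideanSpace ℝ (Fin d) ×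
        EuclideanSpace ℝ (Fin d)) × (Fin N → EuclideanSpace ℝ (Fin d) ×
        EuclideanSpace ℝ (Fin d)) => ‖(ab.2 j).1‖ ^ p + ‖(ab.2 j).2‖ ^ p) π := by
      have h0 : Integrable (fun w : EuclideanSpace ℝ (Fin d) × EuclideanSpace ℝ (Fin d) =>
          ‖w.1‖ ^ p + ‖w.2‖ ^ p) (Measure.map (fun ab : (Fin N → EuclideanSpace ℝ (Fin d) ×
          EuclideanSpace ℝ (Fin d)) × (Fin N → EuclideanSpace ℝ (Fin d) ×
          EuclideanSpace ℝ (Fin d)) => ab.2 j) π) := by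
        rw [hmap2]
        exact (integrable_map_measure hh.aestronglyMeasurable hev.aemeasurable).2 hFj
      exact (integrable_map_measure hh.aestronglyMeasurable
        ((hev.comp measurable_snd).aemeasurable)).1 h0
    refine ((hG1.add hG2).const_mul (2 ^ p)).mono'
      ((cc_measurable d N p hp0 j).aestronglyMeasurable)
      (Filter.Eventually.of_forall fun ab => ?_)
    rw [Real.norm_of_nonneg (cc_nonneg d N p j ab)]
    have b1 : ‖(ab.1 j).1 - (ab.2 j).1‖ ^ p ≤ (‖(ab.1 j).1‖ + ‖(ab.2 j).1‖) ^ p :=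
      Real.rpow_le_rpow (norm_nonneg _) (norm_sub_le _ _) hp0.le
    have b1' := add_rpow_le (norm_nonneg ((ab.1 j).1)) (norm_nonneg ((ab.2 j).1)) hp0.le
    have b2 : ‖(ab.1 j).2 - (ab.2 j).2‖ ^ p ≤ (‖(ab.1 j).2‖ + ‖(ab.2 j).2‖) ^ p :=
      Real.rpow_le_rpow (norm_nonneg _) (norm_sub_le _ _) hp0.le
    have b2' := add_rpow_le (norm_nonneg ((ab.1 j).2)) (norm_nonneg ((ab.2 j).2)) hp0.le
    have hb := add_le_add (b1.trans b1') (b2.trans b2')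
    have hring : 2 ^ p * (‖(ab.1 j).1‖ ^ p + ‖(ab.2 j).1‖ ^ p)
        + 2 ^ p * (‖(ab.1 j).2‖ ^ p + ‖(ab.2 j).2‖ ^ p)
        = 2 ^ p * ((‖(ab.1 j).1‖ ^ p + ‖(ab.1 j).2‖ ^ p)
          + (‖(ab.2 j).1‖ ^ p + ‖(ab.2 j).2‖ ^ p)) := by ring
    simp only [cc, Pi.add_apply]
    linarith
  -- the pushforward coupling and its cost
  have hγprob : IsProbabilityMeasure (Measure.map (Prod.map g g) π) :=
    Measure.isProbabilityMeasure_map hgg.aemeasurable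
  have hScont : Measurable (fun ab : (Fin n → EuclideanSpace ℝ (Fin d) ×
      EuclideanSpace ℝ (Fin d)) × (Fin n → EuclideanSpace ℝ (Fin d) ×
      EuclideanSpace ℝ (Fin d)) => ∑ i : Fin n, cc d n p i ab) :=
    Finset.measurable_sum _ fun i _ => cc_measurable d n p hp0 i
  have hV : (∫ ab, ∑ i : Fin n,
        (‖(ab.1 i).1 - (ab.2 i).1‖ ^ p + ‖(ab.1 i).2 - (ab.2 i).2‖ ^ p)
        ∂(Measure.map (Prod.map g g) π))
      = (n : ℝ) * ∫ ab, cc d N p j0 ab ∂π := by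
    have h0 : (∫ ab, ∑ i : Fin n, cc d n p i ab ∂(Measure.map (Prod.map g g) π))
        = ∫ ab, ∑ i : Fin n, cc d N p (Fin.castLE hnN i) ab ∂π := by
      rw [integral_map hgg.aemeasurable hScont.aestronglyMeasurable]
      rfl
    have h1' : (∫ ab, ∑ i : Fin n, cc d N p (Fin.castLE hnN i) ab ∂π)
        = ∑ i : Fin n, ∫ ab, cc d N p (Fin.castLE hnN i) ab ∂π :=
      integral_finset_sum _ fun i _ => hint (Fin.castLE hnN i)
    calc (∫ ab, ∑ i : Fin n,
          (‖(ab.1 i).1 - (ab.2 i).1‖ ^ p + ‖(ab.1 i).2 - (ab.2 i).2‖ ^ p)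
          ∂(Measure.map (Prod.map g g) π))
        = ∫ ab, ∑ i : Fin n, cc d n p i ab ∂(Measure.map (Prod.map g g) π) := rfl
      _ = ∑ i : Fin n, ∫ ab, cc d N p (Fin.castLE hnN i) ab ∂π := by rw [h0, h1']
      _ = ∑ _i : Fin n, ∫ ab, cc d N p j0 ab ∂π :=
          Finset.sum_congr rfl fun i _ => hIeq (Fin.castLE hnN i)
      _ = (n : ℝ) * ∫ ab, cc d N p j0 ab ∂π := by
          rw [Finset.sum_const, Finset.card_univ, Fintype.card_fin, nsmul_eq_mul]
  -- bounded below
  have hbdd : BddBelow { c : ℝ |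
      ∃ γ : Measure ((Fin n → EuclideanSpace ℝ (Fin d) × EuclideanSpace ℝ (Fin d)) ×
                     (Fin n → EuclideanSpace ℝ (Fin d) × EuclideanSpace ℝ (Fin d))),
        IsProbabilityMeasure γ ∧
        Measure.map Prod.fst γ = Measure.pi (fun _ : Fin n => f) ∧
        Measure.map Prod.snd γ
          = Measure.map
              (fun a : Fin N → EuclideanSpace ℝ (Fin d) × EuclideanSpace ℝ (Fin d) =>
                fun i : Fin n => a (Fin.castLE hnN i)) F ∧
        c = ∫ ab, ∑ j : Fin n,
              (‖(ab.1 j).1 - (ab.2 j).1‖ ^ p + ‖(ab.1 j).2 - (ab.2 j).2‖ ^ p) ∂γ } := by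
    refine ⟨0, fun c hc => ?_⟩
    obtain ⟨γ', _, _, _, hc⟩ := hc
    rw [hc]
    exact integral_nonneg fun ab => Finset.sum_nonneg fun i _ =>
      add_nonneg (Real.rpow_nonneg (norm_nonneg _) _) (Real.rpow_nonneg (norm_nonneg _) _)
  have hmem : ((n : ℝ) * ∫ ab, cc d N p j0 ab ∂π) ∈ { c : ℝ |
      ∃ γ : Measure ((Fin n → EuclideanSpace ℝ (Fin d) × EuclideanSpace ℝ (Fin d)) ×
                     (Fin n → EuclideanSpace ℝ (Fin d) × EuclideanSpace ℝ (Fin d))),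
        IsProbabilityMeasure γ ∧
        Measure.map Prod.fst γ = Measure.pi (fun _ : Fin n => f) ∧
        Measure.map Prod.snd γ
          = Measure.map
              (fun a : Fin N → EuclideanSpace ℝ (Fin d) × EuclideanSpace ℝ (Fin d) =>
                fun i : Fin n => a (Fin.castLE hnN i)) F ∧
        c = ∫ ab, ∑ j : Fin n,
              (‖(ab.1 j).1 - (ab.2 j).1‖ ^ p + ‖(ab.1 j).2 - (ab.2 j).2‖ ^ p) ∂γ } :=
    ⟨Measure.map (Prod.map g g) π, hγprob, h1, h2, hV.symm⟩
  have hfinal := csInf_le hbdd hmem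
  refine le_trans hfinal (le_of_eq ?_)
  -- (n) * ∫ cc j0 = n * (N⁻¹ * ∑ j ∫ cc j)
  have hsum : (∑ j : Fin N, ∫ ab, cc d N p j ab ∂π)
      = (N : ℝ) * ∫ ab, cc d N p j0 ab ∂π := by
    rw [Finset.sum_congr rfl fun j _ => hIeq j, Finset.sum_const, Finset.card_univ,
      Fintype.card_fin, nsmul_eq_mul]
  show ((n : ℝ) * ∫ ab, cc d N p j0 ab ∂π)
      = (n : ℝ) * ((N : ℝ)⁻¹ * ∑ j : Fin N, ∫ ab, cc d N p j ab ∂π)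
  rw [hsum]
  have hNne : (N : ℝ) ≠ 0 := Nat.cast_ne_zero.2 hN0.ne'
  field_simp
end
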